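/- Let T_{i j} : E j → E i (i, j ∈ ℕ) be a family of bounded linear operators and C ≥ 0 a constant such that for every finitely supported ψ ∈ H = lp E 2 (i.e. π_j ψ = 0 for all but finitely many j), the vector whose i-th component is the finite sum Σ_j T_{i j}(π_j ψ) belongs to H and has norm at most C‖ψ‖. Then for EVERY ψ ∈ H and every i the series Σ_{j=0}^∞ T_{i j}(π_j ψ) converges in E i, the vector it assembles belongs to H, and its norm is at most C‖ψ‖. (Part (iii) of the paper's theorem: a chaos matrix that is bounded on the finitely supported vectors is bounded, with full domain.) -/

import Mathlib

open Filter
open scoped ENNReal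

section Aux

variable {E : ℕ → Type*} [∀ i, NormedAddCommGroup (E i)] [∀ i, InnerProductSpace ℂ (E i)]
    [∀ i, CompleteSpace (E i)]

private lemma trunc_apply (ψ : lp E 2) (s : Finset ℕ) (i : ℕ) :
    (↑(∑ j ∈ s, lp.single 2 j (ψ j)) : ∀ i, E i) i = if i ∈ s then ψ i else 0 := by
  rw [lp.coeFn_sum, Finset.sum_apply]
  simp [lp.coeFn_sum, lp.single_apply, Finset.sum_apply, Finset.sum_dite_eq]

private lemma trunc_norm_le (ψ : lp E 2) (s : Finset ℕ) :
    ‖∑ j ∈ s, lp.single 2 j (ψ j)‖ ≤ ‖ψ‖ := by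
  have h2 : (0:ℝ) < (2 : ℝ≥0∞).toReal := by norm_num
  have h1 := lp.norm_sum_single h2 (fun j => (ψ j : E j)) s
  have h3 := lp.sum_rpow_le_norm_rpow h2 ψ s
  rw [← Real.rpow_le_rpow_iff (norm_nonneg _) (norm_nonneg _) h2, h1]
  exact h3

private lemma tsum_trunc (T : ∀ i j : ℕ, E j →L[ℂ] E i) (χ : lp E 2) (s : Finset ℕ)
    (h : ∀ j ∉ s, (χ : ∀ i, E i) j = 0) (i : ℕ) :
    ∑' j : ℕ, T i j (χ j) = ∑ j ∈ s, T i j (χ j) :=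
  tsum_eq_sum (fun j hj => by rw [h j hj, map_zero])

end Aux

/-- If a chaos matrix `T = (T_{i j})` of bounded operators is bounded by `C` on the finitely
supported vectors of `H = lp E 2` (where on such vectors the matrix acts by the finite sums
`Σ_j T_{i j}(π_j ψ)`, encoded below by `∑' j, T i j (ψ j)`), then for EVERY `ψ ∈ H` and every
`i` the series `Σ_j T_{i j}(π_j ψ)` converges, the assembled vector belongs to `H`, and its
norm is at most `C‖ψ‖`. -/
theorem chaosMatrix_bounded_of_bounded_on_finitelySupported
    {E : ℕ → Type*} [∀ i, NormedAddCommGroup (E i)] [∀ i, InnerProductSpace ℂ (E i)]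
    [∀ i, CompleteSpace (E i)]
    (T : ∀ i j : ℕ, E j →L[ℂ] E i) (C : ℝ) (hC : 0 ≤ C)
    (hbdd : ∀ ψ : lp E 2, {j : ℕ | ψ j ≠ 0}.Finite →
      ∃ η : lp E 2, (∀ i : ℕ, η i = ∑' j : ℕ, T i j (ψ j)) ∧ ‖η‖ ≤ C * ‖ψ‖) :
    ∀ ψ : lp E 2, ∃ η : lp E 2,
      (∀ i : ℕ, Tendsto (fun N => ∑ j ∈ Finset.range N, T i j (ψ j)) atTop (nhds (η i))) ∧
      ‖η‖ ≤ C * ‖ψ‖ := by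
  intro ψ
  -- truncations
  set φ : ℕ → lp E 2 := fun N => ∑ j ∈ Finset.range N, lp.single 2 j (ψ j) with hφdef
  have hφ_apply : ∀ N i, (↑(φ N) : ∀ i, E i) i = if i ∈ Finset.range N then ψ i else 0 :=
    fun N i => trunc_apply ψ (Finset.range N) i
  have hφ_fin : ∀ N, {j : ℕ | (↑(φ N) : ∀ i, E i) j ≠ 0}.Finite := by
    intro N
    apply (Finset.range N).finite_toSet.subset
    intro j hj
    simp only [Set.mem_setOf_eq, hφ_apply] at hj
    by_contra h
    exact hj (if_neg h)
  -- the images of the truncations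
  choose ηf hηf hηf_norm using fun N => hbdd (φ N) (hφ_fin N)
  have hsum_eq : ∀ N M : ℕ, N ≤ M → ∀ i,
      ∑ j ∈ Finset.range M, T i j ((↑(φ N) : ∀ i, E i) j)
        = ∑ j ∈ Finset.range N, T i j (ψ j) := by
    intro N M hNM i
    rw [← Finset.sum_subset (Finset.range_subset_range.mpr hNM)
      (fun j _ hj => by rw [hφ_apply, if_neg hj, map_zero])]
    exact Finset.sum_congr rfl fun j hj => by rw [hφ_apply, if_pos hj]
  have hηf_coord : ∀ N i, (↑(ηf N) : ∀ i, E i) i = ∑ j ∈ Finset.range N, T i j (ψ j) := by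
    intro N i
    rw [hηf N i, tsum_trunc T (φ N) (Finset.range N)
      (fun j hj => by rw [hφ_apply]; exact if_neg hj)]
    exact hsum_eq N N le_rfl i
  -- truncations converge to ψ
  have hφ_tendsto : Tendsto φ atTop (nhds ψ) :=
    (lp.hasSum_single (by norm_num) ψ).tendsto_sum_nat
  have hφ_cauchy : CauchySeq φ := hφ_tendsto.cauchySeq
  -- key Lipschitz bound
  have hkey : ∀ N M : ℕ, ‖ηf N - ηf M‖ ≤ C * ‖φ N - φ M‖ := by
    intro N M
    have hfin : {j : ℕ | (↑(φ N - φ M) : ∀ i, E i) j ≠ 0}.Finite := by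
      apply ((hφ_fin N).union (hφ_fin M)).subset
      intro j hj
      simp only [Set.mem_setOf_eq, lp.coeFn_sub, Pi.sub_apply] at hj
      by_contra h
      simp only [Set.mem_union, Set.mem_setOf_eq, not_or, not_not] at h
      rw [h.1, h.2, sub_zero] at hj
      exact hj rfl
    obtain ⟨η', hη', hη'_norm⟩ := hbdd (φ N - φ M) hfin
    have hη'eq : η' = ηf N - ηf M := by
      apply lp.ext
      funext i
      have hzero : ∀ j ∉ Finset.range (max N M), (↑(φ N - φ M) : ∀ i, E i) j = 0 := by
        intro j hj
        simp only [Finset.mem_range, not_lt, sup_le_iff] at hj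
        simp only [lp.coeFn_sub, Pi.sub_apply, hφ_apply, Finset.mem_range]
        rw [if_neg (by omega), if_neg (by omega), sub_zero]
      have hsplit : ∑ j ∈ Finset.range (max N M), T i j ((↑(φ N - φ M) : ∀ i, E i) j)
          = ∑ j ∈ Finset.range (max N M), (T i j ((↑(φ N) : ∀ i, E i) j)
            - T i j ((↑(φ M) : ∀ i, E i) j)) := by
        refine Finset.sum_congr rfl fun j _ => ?_
        simp only [lp.coeFn_sub, Pi.sub_apply, map_sub]
      calc (↑η' : ∀ i, E i) i
          = ∑' j : ℕ, T i j ((↑(φ N - φ M) : ∀ i, E i) j) := hη' i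
        _ = ∑ j ∈ Finset.range (max N M), T i j ((↑(φ N - φ M) : ∀ i, E i) j) :=
            tsum_trunc T _ _ hzero i
        _ = ∑ j ∈ Finset.range N, T i j (ψ j) - ∑ j ∈ Finset.range M, T i j (ψ j) := by
            rw [hsplit, Finset.sum_sub_distrib, hsum_eq N (max N M) (le_max_left N M) i,
              hsum_eq M (max N M) (le_max_right N M) i]
        _ = (↑(ηf N - ηf M) : ∀ i, E i) i := by
            simp only [lp.coeFn_sub, Pi.sub_apply, hηf_coord]
    calc ‖ηf N - ηf M‖ = ‖η'‖ := by rw [hη'eq]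
      _ ≤ C * ‖φ N - φ M‖ := hη'_norm
  -- the images form a Cauchy sequence
  have hηf_cauchy : CauchySeq ηf := by
    rw [Metric.cauchySeq_iff] at hφ_cauchy ⊢
    intro ε hε
    obtain ⟨K, hK⟩ := hφ_cauchy (ε / (C + 1)) (by positivity)
    refine ⟨K, fun m hm n hn => ?_⟩
    have h1 := hK m hm n hn
    rw [dist_eq_norm] at h1 ⊢
    calc ‖ηf m - ηf n‖ ≤ C * ‖φ m - φ n‖ := hkey m n
      _ ≤ (C + 1) * ‖φ m - φ n‖ := by
          apply mul_le_mul_of_nonneg_right (by linarith) (norm_nonneg _)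
      _ < (C + 1) * (ε / (C + 1)) := by
          apply mul_lt_mul_of_pos_left h1 (by linarith)
      _ = ε := by field_simp
  obtain ⟨η, hη⟩ := cauchySeq_tendsto_of_complete hηf_cauchy
  refine ⟨η, fun i => ?_, ?_⟩
  · have hcont : Continuous fun f : lp E 2 => (↑f : ∀ i, E i) i :=
      (continuous_apply i).comp lp.uniformContinuous_coe.continuous
    have := ((hcont.tendsto η).comp hη)
    simp only [Function.comp_def, hηf_coord] at this
    exact this
  · refine le_of_tendsto hη.norm (Eventually.of_forall fun N => ?_)
    calc ‖ηf N‖ ≤ C * ‖φ N‖ := hηf_norm N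
      _ ≤ C * ‖ψ‖ := mul_le_mul_of_nonneg_left (trunc_norm_le ψ (Finset.range N)) hC
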